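/- Call a vector (x, y) ∈ (ℤ/p^kℤ)² primitive if x or y is a unit of ℤ/p^kℤ. The map sending a matrix M ∈ C_ns(p^k) to the column vector M·(1, 0)ᵀ is a bijection from C_ns(p^k) onto the set of primitive vectors of (ℤ/p^kℤ)²; in other words, C_ns(p^k) acts simply transitively on the primitive vectors. -/

import Mathlib

/-- The non-split Cartan subgroup `C_ns(p^k)` acts simply transitively on the primitive vectors
of `(ℤ/p^kℤ)²`: the map sending `M` to its first column `M·(1,0)ᵀ` is a bijection from the set
of matrices in `GL₂(ℤ/p^kℤ)` of the form `[[a, b], [εb, a]]` onto the set of vectors `(x, y)`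
with `x` or `y` a unit. -/
theorem cartan_bijOn_primitive (p k : ℕ) (hp : p.Prime) (hodd : Odd p) (hk : 1 ≤ k)
    (ε : ℤ) (hε : ¬ IsSquare (ε : ZMod p)) :
    Set.BijOn
      (fun M : GL (Fin 2) (ZMod (p ^ k)) =>
        ((M : Matrix (Fin 2) (Fin 2) (ZMod (p ^ k))) 0 0,
         (M : Matrix (Fin 2) (Fin 2) (ZMod (p ^ k))) 1 0))
      {M : GL (Fin 2) (ZMod (p ^ k)) | ∃ a b : ZMod (p ^ k),
        (M : Matrix (Fin 2) (Fin 2) (ZMod (p ^ k))) = !![a, b; (ε : ZMod (p ^ k)) * b, a]}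
      {v : ZMod (p ^ k) × ZMod (p ^ k) | IsUnit v.1 ∨ IsUnit v.2} := by
  have hk0 : k ≠ 0 := by omega
  haveI : Fact p.Prime := ⟨hp⟩
  haveI : NeZero (p ^ k) := ⟨pow_ne_zero k hp.ne_zero⟩
  set f : ZMod (p ^ k) →+* ZMod p := ZMod.castHom (dvd_pow_self p hk0) (ZMod p) with hf
  -- unit criterion
  have hunit : ∀ x : ZMod (p ^ k), IsUnit x ↔ f x ≠ 0 := by
    intro x
    have h1 : f x = ((x.val : ℕ) : ZMod p) := by
      rw [hf, ZMod.castHom_apply, ← ZMod.natCast_val]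
    rw [h1, Ne, ZMod.natCast_eq_zero_iff]
    conv_lhs => rw [← ZMod.natCast_zmod_val x]
    rw [ZMod.isUnit_iff_coprime, Nat.coprime_pow_right_iff (by omega),
      Nat.coprime_comm, hp.coprime_iff_not_dvd]
  have hεp : (ε : ZMod p) ≠ 0 := fun h => hε (h ▸ ⟨0, by simp⟩)
  have hfε : f ((ε : ℤ) : ZMod (p ^ k)) = (ε : ZMod p) := by
    rw [hf]; push_cast; simp
  have hεu : IsUnit ((ε : ℤ) : ZMod (p ^ k)) := by
    rw [hunit, hfε]; exact hεp
  -- key zero criterion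
  have key : ∀ a b : ZMod (p ^ k),
      f (a * a - b * ((ε : ZMod (p ^ k)) * b)) = 0 ↔ f a = 0 ∧ f b = 0 := by
    intro a b
    constructor
    · intro h
      simp only [map_sub, map_mul, hfε] at h
      rw [sub_eq_zero] at h
      have hb : f b = 0 := by
        by_contra hb
        refine hε ⟨f a * (f b)⁻¹, ?_⟩
        rw [mul_mul_mul_comm, h]
        field_simp
      refine ⟨?_, hb⟩
      rw [hb, mul_zero, mul_zero, mul_self_eq_zero] at h
      exact h
    · rintro ⟨ha, hb⟩
      rw [map_sub, map_mul, map_mul, ha, hb, mul_zero, zero_mul, sub_zero]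
  have keyU : ∀ a b : ZMod (p ^ k),
      IsUnit (a * a - b * ((ε : ZMod (p ^ k)) * b)) ↔ IsUnit a ∨ IsUnit b := by
    intro a b
    rw [hunit, hunit, hunit, Ne, key, not_and_or]
  refine ⟨?_, ?_, ?_⟩
  · rintro M ⟨a, b, hM⟩
    have hdet : IsUnit (Matrix.det (M : Matrix (Fin 2) (Fin 2) (ZMod (p ^ k)))) :=
      (Matrix.isUnit_iff_isUnit_det _).mp M.isUnit
    rw [hM, Matrix.det_fin_two_of] at hdet
    have := (keyU a b).mp hdet
    simp only [Set.mem_setOf_eq, hM, Matrix.cons_val', Matrix.cons_val_zero,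
      Matrix.empty_val', Matrix.cons_val_fin_one, Matrix.cons_val_one, Matrix.head_cons,
      Matrix.head_fin_const]
    rcases this with h | h
    · exact Or.inl h
    · exact Or.inr (hεu.mul h)
  · rintro M ⟨a, b, hM⟩ M' ⟨a', b', hM'⟩ h
    simp [hM, hM', Prod.ext_iff] at h
    obtain ⟨h1, h2⟩ := h
    have hb : b = b' := hεu.mul_left_cancel h2
    exact Units.ext (by rw [hM, hM', h1, hb])
  · rintro ⟨x, y⟩ hv
    simp only [Set.mem_setOf_eq] at hv
    have hb : ∃ b : ZMod (p ^ k), ((ε : ℤ) : ZMod (p ^ k)) * b = y ∧ (IsUnit y → IsUnit b) := by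
      refine ⟨Ring.inverse ((ε : ℤ) : ZMod (p ^ k)) * y, ?_, fun hy => ?_⟩
      · rw [← mul_assoc, Ring.mul_inverse_cancel _ hεu, one_mul]
      · exact ((isUnit_ringInverse).mpr hεu).mul hy
    obtain ⟨b, hεb, hbunit⟩ := hb
    have hbu : IsUnit x ∨ IsUnit b := by
      rcases hv with h | h
      · exact Or.inl h
      · exact Or.inr (hbunit h)
    have hdet : IsUnit (!![x, b; ((ε : ℤ) : ZMod (p ^ k)) * b, x]).det := by
      rw [Matrix.det_fin_two_of]
      exact (keyU x b).mpr hbu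
    have hAu : IsUnit !![x, b; ((ε : ℤ) : ZMod (p ^ k)) * b, x] :=
      (Matrix.isUnit_iff_isUnit_det _).mpr hdet
    refine ⟨hAu.unit, ⟨x, b, hAu.unit_spec⟩, ?_⟩
    show ((hAu.unit : Matrix (Fin 2) (Fin 2) (ZMod (p ^ k))) 0 0,
      (hAu.unit : Matrix (Fin 2) (Fin 2) (ZMod (p ^ k))) 1 0) = (x, y)
    rw [hAu.unit_spec]
    simp [hεb]
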